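/- Let K be a field, V a finite-dimensional K-vector space, κ : V × V → K a nondegenerate symmetric bilinear form, and q ∈ V ⊗[K] V its inverse element. Then for every linear endomorphism D : V → V and every scalar λ ∈ K, one has (D ⊗ id + id ⊗ D)(q) = λ • q if and only if κ(Dx,y) + κ(x,Dy) = λ·κ(x,y) for all x,y ∈ V. -/
import Mathlib


open TensorProduct

/-- Let `κ` be a nondegenerate symmetric bilinear form on a finite-dimensional vector
space `V` over a field `K` and let `q ∈ V ⊗ V` be its inverse element.  For an
endomorphism `D` of `V` and a scalar `λ`, one has `(D ⊗ id + id ⊗ D)(q) = λ • q` if and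
only if `κ(Dx,y) + κ(x,Dy) = λ·κ(x,y)` for all `x, y`. -/
theorem inverse_element_smul_iff_symmetric_part
    (K : Type*) [Field K]
    (V : Type*) [AddCommGroup V] [Module K V] [Module.Finite K V]
    (κ : V →ₗ[K] V →ₗ[K] K)
    (hsymm : ∀ x y : V, κ x y = κ y x)
    (hnondeg : ∀ x : V, (∀ y : V, κ x y = 0) → x = 0)
    (q : V ⊗[K] V)
    -- `q` is the inverse element of `κ`: contracting the first tensor factor of `q`
    -- with the linear form `κ x = κ(x, ·)` yields `x`, for every `x`.
    (hq : ∀ x : V, TensorProduct.lift ((LinearMap.lsmul K V).comp (κ x)) q = x)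
    (D : V →ₗ[K] V) (lam : K) :
    ((TensorProduct.map D LinearMap.id + TensorProduct.map LinearMap.id D :
        V ⊗[K] V →ₗ[K] V ⊗[K] V)) q = lam • q ↔
      ∀ x y : V, κ (D x) y + κ x (D y) = lam * κ x y := by
  have hfd : FiniteDimensional K V := ‹_›
  have hinj : Function.Injective κ := by
    intro a b hab
    have h0 : ∀ y, κ (a - b) y = 0 := by intro y; simp [map_sub, hab]
    simpa [sub_eq_zero] using hnondeg _ h0
  have hsurj : Function.Surjective κ :=
    (LinearMap.injective_iff_surjective_of_finrank_eq_finrank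
      Subspace.dual_finrank_eq.symm).mp hinj
  set F : V ⊗[K] V →ₗ[K] V →ₗ[K] V :=
    (dualTensorHom K V V).comp (TensorProduct.map κ LinearMap.id) with hF
  have hFinj : Function.Injective F := by
    rw [hF, LinearMap.coe_comp]
    have h1 : Function.Injective (dualTensorHom K V V) := by
      intro a b hab
      apply (dualTensorHomEquivOfBasis (N := V) (Module.Free.chooseBasis K V)).injective
      rw [dualTensorHomEquivOfBasis_apply, dualTensorHomEquivOfBasis_apply]
      exact hab
    have h2 : Function.Injective (TensorProduct.map κ (LinearMap.id : V →ₗ[K] V)) :=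
      Module.Flat.rTensor_preserves_injective_linearMap (M := V) κ hinj
    exact h1.comp h2
  -- key:  F t x = lift (lsmul ∘ κ x) t
  have hFapp : ∀ (t : V ⊗[K] V) (x : V),
      F t x = TensorProduct.lift ((LinearMap.lsmul K V).comp (κ x)) t := by
    intro t x
    induction t using TensorProduct.induction_on with
    | zero => simp
    | tmul a b => simp [hF, hsymm a x]
    | add s t hs ht => simp [map_add, hs, ht]
  -- F q = id
  have hFq : ∀ x, F q x = x := fun x => by rw [hFapp]; exact hq x
  -- F ((id ⊗ D) t) x = D (F t x)
  have hid : ∀ (t : V ⊗[K] V) (x : V),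
      F (TensorProduct.map LinearMap.id D t) x = D (F t x) := by
    intro t x
    induction t using TensorProduct.induction_on with
    | zero => simp
    | tmul a b => simp [hF]
    | add s t hs ht => simp [map_add, hs, ht]
  -- F ((D ⊗ id) t) x = lift (lsmul ∘ (κ x ∘ D)) t
  have hDid : ∀ (t : V ⊗[K] V) (x : V),
      F (TensorProduct.map D LinearMap.id t) x
        = TensorProduct.lift ((LinearMap.lsmul K V).comp ((κ x).comp D)) t := by
    intro t x
    induction t using TensorProduct.induction_on with
    | zero => simp
    | tmul a b => simp [hF, hsymm (D a) x]
    | add s t hs ht => simp [map_add, hs, ht]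
  constructor
  · intro H x y
    have hx : F (TensorProduct.map D LinearMap.id q) x + D x = lam • x := by
      have := congrArg (fun t => F t x) H
      simpa [map_add, hid, hFq, map_smul] using this
    obtain ⟨x', hx'⟩ := hsurj ((κ x).comp D)
    have hlift : TensorProduct.lift ((LinearMap.lsmul K V).comp ((κ x).comp D)) q = x' := by
      rw [← hx']; exact hq x'
    have hx'' : x' = lam • x - D x := by
      rw [← hlift, ← hDid]; linear_combination (norm := module) hx
    have hxy : κ x (D y) = κ x' y := by simp [hx']
    rw [hxy, hx'']
    simp only [map_sub, map_smul, LinearMap.sub_apply, LinearMap.smul_apply, smul_eq_mul]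
    ring
  · intro H
    apply hFinj
    ext x
    have hdual : (κ x).comp D = lam • κ x - κ (D x) := by
      ext y
      simp only [LinearMap.comp_apply, LinearMap.sub_apply, LinearMap.smul_apply,
        smul_eq_mul]
      linear_combination (H x y)
    have hlin : TensorProduct.lift ((LinearMap.lsmul K V).comp ((κ x).comp D)) q
        = lam • x - D x := by
      rw [hdual]
      have : ∀ t : V ⊗[K] V,
          TensorProduct.lift ((LinearMap.lsmul K V).comp (lam • κ x - κ (D x))) t
            = lam • TensorProduct.lift ((LinearMap.lsmul K V).comp (κ x)) t
              - TensorProduct.lift ((LinearMap.lsmul K V).comp (κ (D x))) t := by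
        intro t
        induction t using TensorProduct.induction_on with
        | zero => simp
        | tmul a b => simp [smul_smul, sub_smul]
        | add s t hs ht => simp [map_add, hs, ht]; module
      rw [this q, hq, hq]
    simp only [map_add, LinearMap.add_apply, map_smul, LinearMap.smul_apply]
    rw [hid, hFq, hDid, hlin]
    module
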